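/- For n ≥ 3, the determinant of the adjacency matrix A(C_n) of the cycle graph C_n satisfies: det A(C_n) = 0 if n ≡ 0 (mod 4), det A(C_n) < 0 if n ≡ 2 (mod 4), and det A(C_n) > 0 if n is odd. -/

import Mathlib

/-- The adjacency matrix of the simple cycle graph `C_n` (for `n ≥ 3`): vertices
`0, …, n-1`, with `A i j = 1` exactly when `i` and `j` are consecutive modulo `n`. -/
def cycAdj (n : ℕ) : Matrix (Fin n) (Fin n) ℝ := fun i j =>
  if (j : ℕ) = ((i : ℕ) + 1) % n ∨ (i : ℕ) = ((j : ℕ) + 1) % n then 1 else 0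

open Finset Polynomial

lemma powmod {ζ : ℂ} {n : ℕ} (h : ζ ^ n = 1) (k : ℕ) : ζ ^ k = ζ ^ (k % n) := by
  conv_lhs => rw [← Nat.div_add_mod k n]
  rw [pow_add, pow_mul, h, one_pow, one_mul]

lemma prod_one_add_pow {m : ℕ} (hm : 0 < m) {ζ : ℂ} (hζ : IsPrimitiveRoot ζ m) :
    ∏ k ∈ Finset.range m, (1 + ζ ^ k) = 1 - (-1 : ℂ) ^ m := by
  have h1 := X_pow_sub_C_eq_prod hζ hm (one_pow m)
  have h2 := congrArg (Polynomial.eval (-1 : ℂ)) h1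
  simp only [eval_sub, eval_pow, eval_X, eval_C, eval_prod, eval_sub, mul_one] at h2
  have h3 : ∏ i ∈ Finset.range m, ((-1 : ℂ) - ζ ^ i)
      = (-1 : ℂ) ^ m * ∏ i ∈ Finset.range m, (1 + ζ ^ i) := by
    calc ∏ i ∈ Finset.range m, ((-1 : ℂ) - ζ ^ i)
        = ∏ i ∈ Finset.range m, ((-1 : ℂ) * (1 + ζ ^ i)) :=
          Finset.prod_congr rfl fun i _ => by ring
      _ = (-1 : ℂ) ^ m * ∏ i ∈ Finset.range m, (1 + ζ ^ i) := by
          rw [Finset.prod_mul_distrib, Finset.prod_const, Finset.card_range]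
  rw [h3] at h2
  have h4 : ((-1 : ℂ) ^ m) * ((-1 : ℂ) ^ m - 1) = ((-1:ℂ)^m) * ((-1:ℂ)^m * ∏ i ∈ Finset.range m, (1 + ζ ^ i)) := by rw [← h2]
  rw [← mul_assoc, ← pow_add, ← two_mul, pow_mul, neg_one_sq, one_pow, one_mul] at h4
  have hsq : ((-1 : ℂ) ^ m) * ((-1 : ℂ) ^ m) = 1 := by
    rw [← pow_add, ← two_mul, pow_mul, neg_one_sq, one_pow]
  rw [← h4, mul_sub, hsq, mul_one]

lemma det_cycAdj_C (n : ℕ) (hn : 3 ≤ n) {ω : ℂ} (hω : IsPrimitiveRoot ω n) :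
    (Complex.ofReal (cycAdj n).det)
      = ∏ k ∈ Finset.range n, (ω ^ k + ω ^ ((n - 1) * k)) := by
  haveI : NeZero n := ⟨by omega⟩
  have hω1 : ω ^ n = 1 := hω.pow_eq_one
  set A : Matrix (Fin n) (Fin n) ℂ := (cycAdj n).map Complex.ofRealHom with hA
  set V : Matrix (Fin n) (Fin n) ℂ := Matrix.vandermonde (fun k : Fin n => ω ^ (k : ℕ)) with hV
  set D : Matrix (Fin n) (Fin n) ℂ :=
    Matrix.diagonal (fun k : Fin n => ω ^ (k : ℕ) + ω ^ ((n - 1) * (k : ℕ))) with hD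
  have hval : ∀ i : Fin n, (((i + 1 : Fin n)) : ℕ) = ((i : ℕ) + 1) % n := by
    intro i
    have h1 : (i + 1 : Fin n) = ⟨((i : ℕ) + 1) % n, Nat.mod_lt _ (by omega)⟩ := by
      rw [Fin.add_def]
      congr 1
      rw [Fin.val_one', Nat.mod_eq_of_lt (by omega : 1 < n)]
    rw [h1]
  have hcongr : ∀ x y : ℕ, x % n = y % n → ω ^ x = ω ^ y := by
    intro x y h
    rw [powmod hω1 x, powmod hω1 y, h]
  have hAV : A * V = V * D := by
    ext i k
    rw [Matrix.mul_apply, Matrix.mul_diagonal]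
    have hne : (i + 1 : Fin n) ≠ i - 1 := by
      intro h
      rw [sub_eq_add_neg] at h
      have h1 : (1 : Fin n) = -1 := add_left_cancel h
      have h2 : ((1 : Fin n) + 1) = 0 := by
        have h2' := congrArg (fun x : Fin n => x + 1) h1
        simpa [neg_add_cancel] using h2'
      have h3 := congrArg Fin.val h2
      rw [Fin.add_def, Fin.val_one'] at h3
      rw [Nat.mod_eq_of_lt (by omega : 1 < n)] at h3
      simp only [Fin.val_mk, Fin.val_zero] at h3
      rw [Nat.mod_eq_of_lt (by omega : 1 + 1 < n)] at h3
      omega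
    have hterm : ∀ j : Fin n, A i j * V j k =
        (if j = i + 1 then ω ^ ((j : ℕ) * (k : ℕ)) else 0)
          + (if j = i - 1 then ω ^ ((j : ℕ) * (k : ℕ)) else 0) := by
      intro j
      have hc : ((j : ℕ) = ((i : ℕ) + 1) % n ∨ (i : ℕ) = ((j : ℕ) + 1) % n)
          ↔ (j = i + 1 ∨ j = i - 1) := by
        constructor
        · rintro (h | h)
          · left; exact Fin.ext (by rw [hval i]; exact h)
          · right
            have h5 : i = j + 1 := Fin.ext (by rw [hval j]; exact h)
            rw [h5, add_sub_cancel_right]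
        · rintro (h | h)
          · left; rw [h, hval i]
          · right; rw [show i = j + 1 by rw [h, sub_add_cancel], hval j]
      have hAij : A i j = if (j : ℕ) = ((i : ℕ) + 1) % n ∨ (i : ℕ) = ((j : ℕ) + 1) % n
          then (1 : ℂ) else 0 := by
        have hent : cycAdj n i j
            = if (j:ℕ) = ((i:ℕ)+1)%n ∨ (i:ℕ) = ((j:ℕ)+1)%n then (1:ℝ) else 0 := rfl
        rw [hA, Matrix.map_apply, hent, apply_ite Complex.ofRealHom, map_one, map_zero]
      have hVjk : V j k = ω ^ ((j : ℕ) * (k : ℕ)) := by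
        rw [hV, Matrix.vandermonde_apply, ← pow_mul]
      rw [hAij, hVjk]
      by_cases h1 : j = i + 1
      · rw [if_pos (hc.mpr (Or.inl h1)), if_pos h1,
          if_neg (fun h2 => hne (h1.symm.trans h2)), one_mul, add_zero]
      · by_cases h2 : j = i - 1
        · rw [if_pos (hc.mpr (Or.inr h2)), if_neg h1, if_pos h2, one_mul, zero_add]
        · rw [if_neg (fun hor => (hc.mp hor).elim h1 h2), if_neg h1, if_neg h2,
            zero_mul, add_zero]
    rw [Finset.sum_congr rfl (fun j _ => hterm j), Finset.sum_add_distrib]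
    simp only [Finset.sum_ite_eq', Finset.mem_univ, if_true]
    have hVik : V i k = ω ^ ((i : ℕ) * (k : ℕ)) := by
      rw [hV, Matrix.vandermonde_apply, ← pow_mul]
    rw [hVik]
    have e1 : ω ^ (((i + 1 : Fin n) : ℕ) * (k : ℕ))
        = ω ^ ((i : ℕ) * (k : ℕ)) * ω ^ (k : ℕ) := by
      rw [← pow_add]
      apply hcongr
      rw [hval i]
      have h4 : ((((i:ℕ) + 1) % n) * (k:ℕ)) % n = (((i:ℕ) + 1) * (k:ℕ)) % n :=
        (Nat.mod_modEq ((i:ℕ) + 1) n).mul_right (k:ℕ)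
      rw [h4, add_mul, one_mul]
    have e2 : ω ^ (((i - 1 : Fin n) : ℕ) * (k : ℕ))
        = ω ^ ((i:ℕ) * (k:ℕ)) * ω ^ ((n - 1) * (k:ℕ)) := by
      rw [← pow_add]
      apply hcongr
      have hb : (((i - 1 : Fin n) : ℕ) + 1) % n = (i : ℕ) := by
        rw [← hval (i - 1), sub_add_cancel]
      have h2 : (((i - 1 : Fin n) : ℕ) + n) % n = ((i:ℕ) + (n - 1)) % n := by
        rw [show ((i - 1 : Fin n) : ℕ) + n = (((i - 1 : Fin n) : ℕ) + 1) + (n - 1) by omega]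
        exact Nat.ModEq.add_right (n - 1) (by rw [Nat.ModEq, hb, Nat.mod_eq_of_lt i.isLt])
      have h1 : ((i - 1 : Fin n) : ℕ) % n = ((i:ℕ) + (n - 1)) % n := by
        rw [← Nat.add_mod_right]; exact h2
      have h5 : (((i - 1 : Fin n) : ℕ) * (k:ℕ)) % n = (((i:ℕ) + (n - 1)) * (k:ℕ)) % n :=
        Nat.ModEq.mul_right (k:ℕ) h1
      rw [h5, add_mul]
    rw [e1, e2]
    ring
  have hdet := congrArg Matrix.det hAV
  rw [Matrix.det_mul, Matrix.det_mul] at hdet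
  have hVdet : V.det ≠ 0 := by
    rw [hV, Matrix.det_vandermonde_ne_zero_iff]
    intro a b hab
    exact Fin.ext (hω.pow_inj a.isLt b.isLt hab)
  rw [mul_comm V.det D.det] at hdet
  have hAD : A.det = D.det := mul_right_cancel₀ hVdet hdet
  have hAdet : A.det = Complex.ofReal (cycAdj n).det :=
    (RingHom.map_det Complex.ofRealHom (cycAdj n)).symm
  rw [← hAdet, hAD, hD, Matrix.det_diagonal]
  rw [Fin.prod_univ_eq_prod_range (fun k => ω ^ k + ω ^ ((n - 1) * k))]

lemma prod_split (n : ℕ) (hn : 3 ≤ n) {ω : ℂ} (hω : IsPrimitiveRoot ω n) :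
    ∏ k ∈ Finset.range n, (ω ^ k + ω ^ ((n - 1) * k))
      = (∏ k ∈ Finset.range n, ω ^ ((n - 1) * k))
          * ∏ k ∈ Finset.range n, (1 + ω ^ (2 * k)) := by
  rw [← Finset.prod_mul_distrib]
  apply Finset.prod_congr rfl
  intro k _
  have h1 : ω ^ ((n - 1) * k) * ω ^ (2 * k) = ω ^ k := by
    rw [← pow_add, show (n - 1) * k + 2 * k = n * k + k by
      have : n - 1 + 2 = n + 1 := by omega
      calc (n - 1) * k + 2 * k = (n - 1 + 2) * k := by ring
        _ = (n + 1) * k := by rw [this]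
        _ = n * k + k := by ring]
    rw [pow_add, pow_mul, hω.pow_eq_one, one_pow, one_mul]
  rw [mul_add, mul_one, h1, add_comm]

lemma S_odd (n : ℕ) (hn : 3 ≤ n) (hodd : Odd n) {ω : ℂ} (hω : IsPrimitiveRoot ω n) :
    ∏ k ∈ Finset.range n, ω ^ ((n - 1) * k) = 1 := by
  rw [Finset.prod_pow_eq_pow_sum, ← Finset.mul_sum]
  obtain ⟨m, hm⟩ := hodd
  have hT : (∑ i ∈ Finset.range n, i) = n * m := by
    have h1 := Finset.sum_range_id_mul_two n
    have h2 : n * (n - 1) = (n * m) * 2 := by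
      rw [show n - 1 = 2 * m by omega]; ring
    rw [h2] at h1
    exact Nat.eq_of_mul_eq_mul_right two_pos h1
  rw [hT, show (n - 1) * (n * m) = n * ((n - 1) * m) by ring, pow_mul, hω.pow_eq_one, one_pow]

lemma S_even (n : ℕ) (hn : 3 ≤ n) {m : ℕ} (hm : n = 2 * m) {ω : ℂ}
    (hω : IsPrimitiveRoot ω n) :
    ∏ k ∈ Finset.range n, ω ^ ((n - 1) * k) = -1 := by
  rw [Finset.prod_pow_eq_pow_sum, ← Finset.mul_sum]
  have hT : (∑ i ∈ Finset.range n, i) = m * (n - 1) := by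
    have h1 := Finset.sum_range_id_mul_two n
    have h2 : n * (n - 1) = (m * (n - 1)) * 2 := by rw [hm]; ring
    rw [h2] at h1
    exact Nat.eq_of_mul_eq_mul_right two_pos h1
  obtain ⟨b, hb⟩ : ∃ b, n - 1 = b + 1 := ⟨n - 2, by omega⟩
  have hnb : n = b + 2 := by omega
  have hE : (n - 1) * (m * (n - 1)) = n * (m * b) + m := by
    rw [hb, hnb]; ring
  rw [hT, hE, pow_add, pow_mul, hω.pow_eq_one, one_pow, one_mul]
  have hsq : ω ^ m * ω ^ m = 1 := by
    rw [← pow_add, ← two_mul, ← hm, hω.pow_eq_one]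
  rcases mul_self_eq_one_iff.mp hsq with h | h
  · exact absurd h (hω.pow_ne_one_of_pos_of_lt (by omega) (by omega))
  · exact h

lemma Q_odd (n : ℕ) (hn : 3 ≤ n) (hodd : Odd n) {ω : ℂ} (hω : IsPrimitiveRoot ω n) :
    ∏ k ∈ Finset.range n, (1 + ω ^ (2 * k)) = 2 := by
  have hω2 : IsPrimitiveRoot (ω ^ 2) n :=
    hω.pow_of_coprime 2 (Nat.coprime_two_left.mpr hodd)
  calc ∏ k ∈ Finset.range n, (1 + ω ^ (2 * k))
      = ∏ k ∈ Finset.range n, (1 + (ω ^ 2) ^ k) := by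
        refine Finset.prod_congr rfl fun k _ => by rw [← pow_mul]
    _ = 1 - (-1 : ℂ) ^ n := prod_one_add_pow (by omega) hω2
    _ = 2 := by rw [hodd.neg_one_pow]; ring

lemma Q_even (n : ℕ) (hn : 3 ≤ n) {m : ℕ} (hm : n = 2 * m) {ω : ℂ}
    (hω : IsPrimitiveRoot ω n) :
    ∏ k ∈ Finset.range n, (1 + ω ^ (2 * k)) = (1 - (-1 : ℂ) ^ m) ^ 2 := by
  have hζ : IsPrimitiveRoot (ω ^ 2) m := hω.pow (by omega) hm
  have hζm : (ω ^ 2) ^ m = 1 := by rw [← pow_mul, ← hm, hω.pow_eq_one]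
  have hQ : ∏ k ∈ Finset.range n, (1 + ω ^ (2 * k))
      = ∏ k ∈ Finset.range n, (1 + (ω ^ 2) ^ k) :=
    Finset.prod_congr rfl fun k _ => by rw [← pow_mul]
  rw [hQ, show n = m + m by omega, Finset.prod_range_add]
  have h2 : ∀ k, (1 + (ω ^ 2) ^ (m + k)) = (1 + (ω ^ 2) ^ k) := by
    intro k
    rw [pow_add, hζm, one_mul]
  rw [Finset.prod_congr rfl fun k _ => h2 k,
    prod_one_add_pow (by omega) hζ]
  ring

lemma det_cycAdj_odd (n : ℕ) (hn : 3 ≤ n) (hodd : Odd n) : (cycAdj n).det = 2 := by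
  have hω := Complex.isPrimitiveRoot_exp n (by omega)
  have h := det_cycAdj_C n hn hω
  rw [prod_split n hn hω, S_odd n hn hodd hω, Q_odd n hn hodd hω, one_mul] at h
  exact_mod_cast h

lemma det_cycAdj_even (n : ℕ) (hn : 3 ≤ n) {m : ℕ} (hm : n = 2 * m) :
    (cycAdj n).det = -((1 - (-1 : ℝ) ^ m) ^ 2) := by
  have hω := Complex.isPrimitiveRoot_exp n (by omega)
  have h := det_cycAdj_C n hn hω
  rw [prod_split n hn hω, S_even n hn hm hω, Q_even n hn hm hω] at h
  have h2 : (Complex.ofReal (cycAdj n).det) = Complex.ofReal (-((1 - (-1:ℝ)^m)^2)) := by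
    rw [h]; push_cast; ring
  exact_mod_cast h2

/-- The determinant of the adjacency matrix of the cycle `C_n` (`n ≥ 3`) vanishes for
`n ≡ 0 (mod 4)`, is negative for `n ≡ 2 (mod 4)`, and is positive for odd `n`. -/
theorem det_cycAdj (n : ℕ) (hn : 3 ≤ n) :
    (n % 4 = 0 → (cycAdj n).det = 0) ∧
    (n % 4 = 2 → (cycAdj n).det < 0) ∧
    (Odd n → 0 < (cycAdj n).det) := by
  refine ⟨?_, ?_, ?_⟩
  · intro h4
    rw [det_cycAdj_even n hn (show n = 2 * (n / 2) by omega)]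
    have he : Even (n / 2) := by rw [Nat.even_iff]; omega
    rw [he.neg_one_pow]
    norm_num
  · intro h4
    rw [det_cycAdj_even n hn (show n = 2 * (n / 2) by omega)]
    have he : Odd (n / 2) := by rw [Nat.odd_iff]; omega
    rw [he.neg_one_pow]
    norm_num
  · intro hodd
    rw [det_cycAdj_odd n hn hodd]
    norm_num
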